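/- Let G = (A ∪ B, E) be a connected bipartite graph with |A| = n₁, |B| = n₂ and |E| = m, and let I be the CHA instance whose switching graph (with respect to the popular matching M_φ corresponding to the empty matching of G) is the directed graph S constructed as follows: orient every edge of G from A to B with weight −1; for every u ∈ A add a new vertex u' and a directed edge u' → u of weight +1; every vertex of A' = {u' : u ∈ A} and of A is saturated, and every vertex of B is unsaturated with unsaturation degree 1 (so I has 2n₁ + n₂ houses and n₁ + m agents, each agent having a preference list of length 2 determined by the edge weights of S). Then the number of matchings of G (including the empty matching) equals the number of popular matchings of I. -/

import Mathlib

/-- A Capacitated House Allocation (CHA) instance: agents `A`, houses `H`, a capacity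
function `cap : H → ℤ_{>0}`, and for each agent a strict preference order (lower rank
means more preferred) over its adjacent houses, augmented with a unique last-resort
house `l(a)` of capacity `1` and lowest preference, appearing only on `a`'s list. -/
structure CHAInstance (A H : Type*) where
  adj : A → H → Prop
  rank : A → H → ℕ
  rank_strict : ∀ a h h', adj a h → adj a h' → rank a h = rank a h' → h = h'
  cap : H → ℕ
  cap_pos : ∀ h, 0 < cap h
  lastResort : A → H
  lastResort_injective : Function.Injective lastResort
  lastResort_adj : ∀ a, adj a (lastResort a)
  lastResort_worst : ∀ a h, adj a h → h ≠ lastResort a → rank a h < rank a (lastResort a)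
  lastResort_only : ∀ a a', adj a' (lastResort a) → a' = a
  lastResort_cap : ∀ a, cap (lastResort a) = 1

namespace CHAInstance

variable {A H : Type*}

/-- A matching of the CHA instance `I`: each agent is matched to at most one adjacent
house, and each house `h` is matched to at most `cap h` agents. -/
def IsMatching (I : CHAInstance A H) (M : Set (A × H)) : Prop :=
  (∀ p ∈ M, I.adj p.1 p.2) ∧ (∀ p ∈ M, ∀ q ∈ M, p.1 = q.1 → p = q) ∧
    (∀ h : H, {a | (a, h) ∈ M}.ncard ≤ I.cap h)

/-- Agent `a` prefers matching `M` to matching `M'`: `a` is matched in `M` and either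
unmatched in `M'`, or strictly prefers its house in `M` to its house in `M'`. -/
def Prefers (I : CHAInstance A H) (M M' : Set (A × H)) (a : A) : Prop :=
  ∃ h, (a, h) ∈ M ∧ ∀ h', (a, h') ∈ M' → I.rank a h < I.rank a h'

/-- `M` is more popular than `M'`. -/
def MorePopular [Fintype A] (I : CHAInstance A H) (M M' : Set (A × H)) : Prop :=
  Nat.card {a | Prefers I M M' a} > Nat.card {a | Prefers I M' M a}

/-- `M` is a popular matching of `I`. -/
def IsPopular [Fintype A] (I : CHAInstance A H) (M : Set (A × H)) : Prop :=
  I.IsMatching M ∧ ∀ M', I.IsMatching M' → ¬ MorePopular I M' M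

/-- `h = f(a)`: house `h` is the (unique) first choice of agent `a`. -/
def IsFirstChoice (I : CHAInstance A H) (a : A) (h : H) : Prop :=
  I.adj a h ∧ ∀ h', I.adj a h' → I.rank a h ≤ I.rank a h'

/-- `f(h)`: the set of agents whose first choice is `h`. -/
def fSet (I : CHAInstance A H) (h : H) : Set A := {a | IsFirstChoice I a h}

/-- `h` is an `f`-house if it is the first choice of some agent. -/
def IsFHouse (I : CHAInstance A H) (h : H) : Prop := ∃ a, IsFirstChoice I a h

/-- The defining condition for `s(a)`: `h` is not an `f`-house, or `h` is an `f`-house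
with `h ≠ f(a)` and `|f(h)| < c(h)`. -/
def SCond (I : CHAInstance A H) (a : A) (h : H) : Prop :=
  ¬ IsFHouse I h ∨ (¬ IsFirstChoice I a h ∧ (fSet I h).ncard < I.cap h)

/-- `h = s(a)`: house `h` is the highest-ranked house on `a`'s preference list
satisfying `SCond`. -/
def IsSecondChoice (I : CHAInstance A H) (a : A) (h : H) : Prop :=
  I.adj a h ∧ SCond I a h ∧ ∀ h', I.adj a h' → SCond I a h' → I.rank a h ≤ I.rank a h'

/-- The switching graph `G_M` of `I` with respect to a popular matching `M`:
`SwEdge I M a src tgt w` says that agent `a` contributes the directed edge from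
`src = M(a)` to `tgt`, the other element of `{f(a), s(a)}`, with weight
`w = -1` if `M(a) = f(a)` and `w = +1` otherwise. -/
def SwEdge (I : CHAInstance A H) (M : Set (A × H)) (a : A) (src tgt : H) (w : ℤ) :
    Prop :=
  (a, src) ∈ M ∧
    ((IsFirstChoice I a src ∧ IsSecondChoice I a tgt ∧ w = -1) ∨
     (IsSecondChoice I a src ∧ IsFirstChoice I a tgt ∧ w = 1))

/-- The unsaturation degree `u_M(h) = c(h) - |M(h)|` of a house `h`. -/
noncomputable def unsatDeg (I : CHAInstance A H) (M : Set (A × H)) (h : H) : ℕ :=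
  I.cap h - {a | (a, h) ∈ M}.ncard

/-- A house is saturated if its unsaturation degree is `0`. -/
def Saturated (I : CHAInstance A H) (M : Set (A × H)) (h : H) : Prop :=
  unsatDeg I M h = 0

end CHAInstance

section Reduction

variable {A B : Type*}

/-- The edges of the bipartite graph `G = (A ∪ B, E)`, as a type. -/
abbrev GraphEdges (Gadj : A → B → Prop) := {p : A × B // Gadj p.1 p.2}

/-- The agents of the CHA instance `I`: one agent per edge of `G` (the `-1` edges
`u → v` of `S`) and one agent per vertex `u ∈ A` (the `+1` edges `u' → u` of `S`). -/
abbrev ReductionAgents (Gadj : A → B → Prop) := GraphEdges Gadj ⊕ A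

/-- The houses of the CHA instance `I`: the primed copies `u'` of vertices of `A`, the
vertices of `A`, the vertices of `B`, and one last-resort house per agent. -/
abbrev ReductionHouses (Gadj : A → B → Prop) :=
  (A ⊕ (A ⊕ B)) ⊕ ReductionAgents Gadj

variable (Gadj : A → B → Prop)

/-- The house `u'` (primed copy of `u ∈ A`). -/
def housePrime (u : A) : ReductionHouses Gadj := Sum.inl (Sum.inl u)

/-- The house `u` for `u ∈ A`. -/
def houseA (u : A) : ReductionHouses Gadj := Sum.inl (Sum.inr (Sum.inl u))

/-- The house `v` for `v ∈ B`. -/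
def houseB (v : B) : ReductionHouses Gadj := Sum.inl (Sum.inr (Sum.inr v))

/-- `G`, viewed as a simple graph on `A ⊕ B` (used to state connectedness). -/
def GraphOfRel : SimpleGraph (A ⊕ B) :=
  SimpleGraph.fromRel (fun x y => ∃ u v, x = Sum.inl u ∧ y = Sum.inr v ∧ Gadj u v)

/-- A matching of the bipartite graph `G = (A ∪ B, E)`: a set of pairwise
vertex-disjoint edges. -/
def IsBipMatching (N : Set (A × B)) : Prop :=
  (∀ p ∈ N, Gadj p.1 p.2) ∧ (∀ p ∈ N, ∀ q ∈ N, p.1 = q.1 → p = q) ∧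
    (∀ p ∈ N, ∀ q ∈ N, p.2 = q.2 → p = q)

end Reduction

set_option linter.unusedSectionVars false
set_option linter.unusedVariables false

namespace CHAProof
open CHAInstance

variable {A B : Type*}

section Defs
variable (Gadj : A → B → Prop)

open scoped Classical in
noncomputable def fOfN (N : Set (A × B)) : ReductionAgents Gadj → ReductionHouses Gadj
  | Sum.inl e => if e.1 ∈ N then houseB Gadj e.1.2 else houseA Gadj e.1.1
  | Sum.inr u => if ∃ v, (u, v) ∈ N then houseA Gadj u else housePrime Gadj u

/-- The CHA matching corresponding to a bipartite matching `N`. -/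
def MofN (N : Set (A × B)) : Set (ReductionAgents Gadj × ReductionHouses Gadj) :=
  {p | p.2 = fOfN Gadj N p.1}

/-- The `A`-vertex associated to an agent. -/
def proj : ReductionAgents Gadj → A := Sum.elim (fun e => e.1.1) id

noncomputable def deg (u : A) : ℕ := {v : B | Gadj u v}.ncard

@[simp] lemma proj_inl (e : GraphEdges Gadj) : proj Gadj (Sum.inl e) = e.1.1 := rfl
@[simp] lemma proj_inr (u : A) : proj Gadj (Sum.inr u) = u := rfl

end Defs

/-- All the hypotheses of the main theorem, bundled. -/
structure Hyp [Fintype A] [Fintype B] (Gadj : A → B → Prop)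
    (I : CHAInstance (ReductionAgents Gadj) (ReductionHouses Gadj)) : Prop where
  hlr : I.lastResort = Sum.inr
  hadjE : ∀ (e : GraphEdges Gadj) (h : ReductionHouses Gadj),
      I.adj (Sum.inl e) h ↔
        (h = houseA Gadj e.1.1 ∨ h = houseB Gadj e.1.2 ∨ h = Sum.inr (Sum.inl e))
  hadjA : ∀ (u : A) (h : ReductionHouses Gadj),
      I.adj (Sum.inr u) h ↔
        (h = houseA Gadj u ∨ h = housePrime Gadj u ∨ h = Sum.inr (Sum.inr u))
  hrankE : ∀ e : GraphEdges Gadj,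
      I.rank (Sum.inl e) (houseA Gadj e.1.1) < I.rank (Sum.inl e) (houseB Gadj e.1.2)
  hrankA : ∀ u : A,
      I.rank (Sum.inr u) (houseA Gadj u) < I.rank (Sum.inr u) (housePrime Gadj u)
  hcapPrime : ∀ u : A, I.cap (housePrime Gadj u) = 1
  hcapA : ∀ u : A, I.cap (houseA Gadj u) = {v : B | Gadj u v}.ncard
  hcapB : ∀ v : B, I.cap (houseB Gadj v) = 1

section Main
variable [Fintype A] [Fintype B] {Gadj : A → B → Prop}
  {I : CHAInstance (ReductionAgents Gadj) (ReductionHouses Gadj)}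

lemma Hyp.degpos (hy : Hyp Gadj I) (u : A) : 0 < deg Gadj u := by
  have := I.cap_pos (houseA Gadj u)
  rwa [hy.hcapA] at this

/-- every agent is adjacent to the `houseA` of its projection -/
lemma Hyp.adj_fc (hy : Hyp Gadj I) (a : ReductionAgents Gadj) :
    I.adj a (houseA Gadj (proj Gadj a)) := by
  cases a with
  | inl e => exact (hy.hadjE e _).2 (Or.inl rfl)
  | inr u => exact (hy.hadjA u _).2 (Or.inl rfl)

/-- `houseA (proj a)` is the strict first choice of every agent `a`. -/
lemma Hyp.rankMin (hy : Hyp Gadj I) (a : ReductionAgents Gadj)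
    (h : ReductionHouses Gadj) (hadj : I.adj a h)
    (hne : h ≠ houseA Gadj (proj Gadj a)) :
    I.rank a (houseA Gadj (proj Gadj a)) < I.rank a h := by
  cases a with
  | inl e =>
    rcases (hy.hadjE e h).1 hadj with rfl | rfl | rfl
    · exact absurd rfl hne
    · exact hy.hrankE e
    · have h1 : houseA Gadj e.1.1 ≠ I.lastResort (Sum.inl e) := by
        rw [hy.hlr]; simp [houseA]
      have := I.lastResort_worst (Sum.inl e) (houseA Gadj e.1.1) (hy.adj_fc (Sum.inl e)) h1
      rwa [hy.hlr] at this
  | inr u =>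
    rcases (hy.hadjA u h).1 hadj with rfl | rfl | rfl
    · exact absurd rfl hne
    · exact hy.hrankA u
    · have h1 : houseA Gadj u ≠ I.lastResort (Sum.inr u) := by
        rw [hy.hlr]; simp [houseA]
      have := I.lastResort_worst (Sum.inr u) (houseA Gadj u) (hy.adj_fc (Sum.inr u)) h1
      rwa [hy.hlr] at this

end Main
end CHAProof

namespace CHAProof
open CHAInstance
variable {A B : Type*}

section Counting
variable {Gadj : A → B → Prop}

@[simp] lemma houseA_inj {u u' : A} : houseA Gadj u = houseA Gadj u' ↔ u = u' := by
  simp [houseA]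
@[simp] lemma houseB_inj {v v' : B} : houseB Gadj v = houseB Gadj v' ↔ v = v' := by
  simp [houseB]
@[simp] lemma housePrime_inj {u u' : A} : housePrime Gadj u = housePrime Gadj u' ↔ u = u' := by
  simp [housePrime]
@[simp] lemma houseA_ne_houseB {u : A} {v : B} : houseA Gadj u ≠ houseB Gadj v := by
  simp [houseA, houseB]
@[simp] lemma houseB_ne_houseA {u : A} {v : B} : houseB Gadj v ≠ houseA Gadj u := by
  simp [houseA, houseB]
@[simp] lemma housePrime_ne_houseA {u u' : A} : housePrime Gadj u ≠ houseA Gadj u' := by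
  simp [houseA, housePrime]
@[simp] lemma houseA_ne_housePrime {u u' : A} : houseA Gadj u' ≠ housePrime Gadj u := by
  simp [houseA, housePrime]
@[simp] lemma housePrime_ne_houseB {u : A} {v : B} : housePrime Gadj u ≠ houseB Gadj v := by
  simp [houseB, housePrime]
@[simp] lemma houseB_ne_housePrime {u : A} {v : B} : houseB Gadj v ≠ housePrime Gadj u := by
  simp [houseB, housePrime]
@[simp] lemma houseA_ne_inr {u : A} {x : ReductionAgents Gadj} :
    houseA Gadj u ≠ Sum.inr x := by simp [houseA]
@[simp] lemma houseB_ne_inr {v : B} {x : ReductionAgents Gadj} :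
    houseB Gadj v ≠ Sum.inr x := by simp [houseB]
@[simp] lemma housePrime_ne_inr {u : A} {x : ReductionAgents Gadj} :
    housePrime Gadj u ≠ Sum.inr x := by simp [housePrime]
@[simp] lemma inr_ne_houseA {u : A} {x : ReductionAgents Gadj} :
    Sum.inr x ≠ houseA Gadj u := by simp [houseA]
@[simp] lemma inr_ne_houseB {v : B} {x : ReductionAgents Gadj} :
    Sum.inr x ≠ houseB Gadj v := by simp [houseB]
@[simp] lemma inr_ne_housePrime {u : A} {x : ReductionAgents Gadj} :
    Sum.inr x ≠ housePrime Gadj u := by simp [housePrime]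

lemma fOfN_inl_mem {N : Set (A × B)} {e : GraphEdges Gadj} (he : e.1 ∈ N) :
    fOfN Gadj N (Sum.inl e) = houseB Gadj e.1.2 := by
  simp [fOfN, he]

lemma fOfN_inl_not {N : Set (A × B)} {e : GraphEdges Gadj} (he : e.1 ∉ N) :
    fOfN Gadj N (Sum.inl e) = houseA Gadj e.1.1 := by
  simp [fOfN, he]

lemma fOfN_inr_mem {N : Set (A × B)} {u : A} (hu : ∃ v, (u, v) ∈ N) :
    fOfN Gadj N (Sum.inr u) = houseA Gadj u := by
  simp [fOfN, hu]

lemma fOfN_inr_not {N : Set (A × B)} {u : A} (hu : ¬ ∃ v, (u, v) ∈ N) :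
    fOfN Gadj N (Sum.inr u) = housePrime Gadj u := by
  simp [fOfN, hu]

lemma fOfN_ne_inr {N : Set (A × B)} (a : ReductionAgents Gadj)
    (x : ReductionAgents Gadj) : fOfN Gadj N a ≠ Sum.inr x := by
  classical
  cases a with
  | inl e =>
    by_cases he : e.1 ∈ N
    · rw [fOfN_inl_mem he]; simp
    · rw [fOfN_inl_not he]; simp
  | inr u =>
    by_cases hu : ∃ v, (u, v) ∈ N
    · rw [fOfN_inr_mem hu]; simp
    · rw [fOfN_inr_not hu]; simp

/-- the set of agents matched to `houseA u` by `MofN N` has exactly `deg u` elements -/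
lemma SAcard {N : Set (A × B)} (hN : IsBipMatching Gadj N) (u : A) :
    {a : ReductionAgents Gadj | fOfN Gadj N a = houseA Gadj u}.ncard = deg Gadj u := by
  classical
  set j : B → ReductionAgents Gadj := fun v =>
    if hv : Gadj u v then
      (if (u, v) ∈ N then (Sum.inr u : ReductionAgents Gadj)
        else Sum.inl ⟨(u, v), hv⟩) else Sum.inr u with hj
  have himg : {a : ReductionAgents Gadj | fOfN Gadj N a = houseA Gadj u} =
      j '' {v : B | Gadj u v} := by
    ext a
    simp only [Set.mem_setOf_eq, Set.mem_image]
    constructor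
    · intro ha
      cases a with
      | inl e =>
        by_cases he : e.1 ∈ N
        · rw [fOfN_inl_mem he] at ha; exact absurd ha houseB_ne_houseA
        · rw [fOfN_inl_not he] at ha
          have hu : e.1.1 = u := houseA_inj.1 ha
          have hGadj : Gadj u e.1.2 := by rw [← hu]; exact e.2
          have hpe : ((u, e.1.2) : A × B) = e.1 := by rw [← hu]
          refine ⟨e.1.2, hGadj, ?_⟩
          rw [hj]
          simp only
          rw [dif_pos hGadj, if_neg (by rw [hpe]; exact he)]
          congr 1
          exact Subtype.ext hpe
      | inr w =>
        by_cases hw : ∃ v, (w, v) ∈ N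
        · rw [fOfN_inr_mem hw] at ha
          have : w = u := houseA_inj.1 ha
          subst this
          obtain ⟨v0, hv0⟩ := hw
          have hG : Gadj w v0 := hN.1 _ hv0
          refine ⟨v0, hG, ?_⟩
          rw [hj]; simp only
          rw [dif_pos hG, if_pos hv0]
        · rw [fOfN_inr_not hw] at ha; exact absurd ha housePrime_ne_houseA
    · rintro ⟨v, hv, rfl⟩
      rw [hj]; simp only
      rw [dif_pos hv]
      by_cases hvN : (u, v) ∈ N
      · rw [if_pos hvN, fOfN_inr_mem ⟨v, hvN⟩]
      · rw [if_neg hvN, fOfN_inl_not hvN]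
  have hinj : Set.InjOn j {v : B | Gadj u v} := by
    intro v1 hv1 v2 hv2 heq
    simp only [Set.mem_setOf_eq] at hv1 hv2
    rw [hj] at heq; simp only at heq
    rw [dif_pos hv1, dif_pos hv2] at heq
    by_cases h1 : (u, v1) ∈ N <;> by_cases h2 : (u, v2) ∈ N
    · have := hN.2.1 _ h1 _ h2 rfl
      exact (Prod.ext_iff.1 this).2
    · rw [if_pos h1, if_neg h2] at heq; exact absurd heq (by simp)
    · rw [if_neg h1, if_pos h2] at heq; exact absurd heq (by simp)
    · rw [if_neg h1, if_neg h2] at heq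
      have h3 := Subtype.ext_iff.1 (Sum.inl_injective heq)
      exact (Prod.ext_iff.1 h3).2
  rw [himg, Set.ncard_image_of_injOn hinj]
  rfl

end Counting
end CHAProof

namespace CHAProof
open CHAInstance
variable {A B : Type*}

section Counting
variable {Gadj : A → B → Prop}

lemma mem_MofN {N : Set (A × B)} {p : ReductionAgents Gadj × ReductionHouses Gadj} :
    p ∈ MofN Gadj N ↔ p.2 = fOfN Gadj N p.1 := Iff.rfl

lemma mem_MofN' {N : Set (A × B)} (a : ReductionAgents Gadj) :
    (a, fOfN Gadj N a) ∈ MofN Gadj N := rfl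

lemma proj_of_fOfN {N : Set (A × B)} {a : ReductionAgents Gadj} {u : A}
    (h : fOfN Gadj N a = houseA Gadj u) : proj Gadj a = u := by
  classical
  cases a with
  | inl e =>
    by_cases he : e.1 ∈ N
    · rw [fOfN_inl_mem he] at h; exact absurd h houseB_ne_houseA
    · rw [fOfN_inl_not he] at h; exact houseA_inj.1 h
  | inr w =>
    by_cases hw : ∃ v, (w, v) ∈ N
    · rw [fOfN_inr_mem hw] at h; exact houseA_inj.1 h
    · rw [fOfN_inr_not hw] at h; exact absurd h housePrime_ne_houseA

end Counting

section Main
variable [Fintype A] [Fintype B] {Gadj : A → B → Prop}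
  [DecidablePred fun p : A × B => Gadj p.1 p.2]
  {I : CHAInstance (ReductionAgents Gadj) (ReductionHouses Gadj)}

lemma Hyp.MofN_isMatching (hy : Hyp Gadj I) {N : Set (A × B)}
    (hN : IsBipMatching Gadj N) : I.IsMatching (MofN Gadj N) := by
  classical
  refine ⟨?_, ?_, ?_⟩
  · rintro ⟨a, h⟩ hp
    rw [mem_MofN] at hp
    simp only at hp
    subst hp
    cases a with
    | inl e =>
      by_cases he : e.1 ∈ N
      · rw [fOfN_inl_mem he]; exact (hy.hadjE e _).2 (Or.inr (Or.inl rfl))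
      · rw [fOfN_inl_not he]; exact (hy.hadjE e _).2 (Or.inl rfl)
    | inr u =>
      by_cases hu : ∃ v, (u, v) ∈ N
      · rw [fOfN_inr_mem hu]; exact (hy.hadjA u _).2 (Or.inl rfl)
      · rw [fOfN_inr_not hu]; exact (hy.hadjA u _).2 (Or.inr (Or.inl rfl))
  · rintro ⟨a, h⟩ hp ⟨a', h'⟩ hq hfst
    simp only at hfst
    subst hfst
    rw [mem_MofN] at hp hq
    simp only at hp hq
    simp [hp, hq]
  · intro h
    have hset : {a : ReductionAgents Gadj | (a, h) ∈ MofN Gadj N} =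
        {a : ReductionAgents Gadj | fOfN Gadj N a = h} := by
      ext a; simp [mem_MofN, eq_comm]
    rw [hset]
    match h with
    | Sum.inl (Sum.inl u) =>
      have hsub : {a : ReductionAgents Gadj |
          fOfN Gadj N a = (Sum.inl (Sum.inl u) : ReductionHouses Gadj)} ⊆ {Sum.inr u} := by
        intro a ha
        simp only [Set.mem_setOf_eq] at ha
        cases a with
        | inl e =>
          by_cases he : e.1 ∈ N
          · rw [fOfN_inl_mem he] at ha; exact absurd ha (by simp [houseB])
          · rw [fOfN_inl_not he] at ha; exact absurd ha (by simp [houseA])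
        | inr w =>
          by_cases hw : ∃ v, (w, v) ∈ N
          · rw [fOfN_inr_mem hw] at ha; exact absurd ha (by simp [houseA])
          · rw [fOfN_inr_not hw] at ha
            have : w = u := by simpa [housePrime] using ha
            simp [this]
      calc _ ≤ ({Sum.inr u} : Set (ReductionAgents Gadj)).ncard :=
              Set.ncard_le_ncard hsub (Set.toFinite _)
        _ = 1 := Set.ncard_singleton _
        _ ≤ I.cap (Sum.inl (Sum.inl u)) := by
              rw [show (Sum.inl (Sum.inl u) : ReductionHouses Gadj) =
                housePrime Gadj u from rfl, hy.hcapPrime]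
    | Sum.inl (Sum.inr (Sum.inl u)) =>
      rw [show (Sum.inl (Sum.inr (Sum.inl u)) : ReductionHouses Gadj) =
        houseA Gadj u from rfl, hy.hcapA, SAcard hN u]
      exact le_refl _
    | Sum.inl (Sum.inr (Sum.inr v)) =>
      rw [show (Sum.inl (Sum.inr (Sum.inr v)) : ReductionHouses Gadj) =
        houseB Gadj v from rfl, hy.hcapB]
      rw [Set.ncard_le_one_iff (Set.toFinite _)]
      intro a b ha hb
      simp only [Set.mem_setOf_eq] at ha hb
      have key : ∀ c : ReductionAgents Gadj, fOfN Gadj N c = houseB Gadj v →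
          ∃ e : GraphEdges Gadj, c = Sum.inl e ∧ e.1 ∈ N ∧ e.1.2 = v := by
        intro c hc
        cases c with
        | inl e =>
          by_cases he : e.1 ∈ N
          · rw [fOfN_inl_mem he] at hc
            exact ⟨e, rfl, he, houseB_inj.1 hc⟩
          · rw [fOfN_inl_not he] at hc; exact absurd hc houseA_ne_houseB
        | inr w =>
          by_cases hw : ∃ v', (w, v') ∈ N
          · rw [fOfN_inr_mem hw] at hc; exact absurd hc houseA_ne_houseB
          · rw [fOfN_inr_not hw] at hc; exact absurd hc housePrime_ne_houseB
      obtain ⟨e1, rfl, he1, hv1⟩ := key a ha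
      obtain ⟨e2, rfl, he2, hv2⟩ := key b hb
      have : e1.1 = e2.1 := hN.2.2 _ he1 _ he2 (hv1.trans hv2.symm)
      rw [Subtype.ext this]
    | Sum.inr x =>
      have : {a : ReductionAgents Gadj |
          fOfN Gadj N a = (Sum.inr x : ReductionHouses Gadj)} = ∅ := by
        ext a; simp [fOfN_ne_inr a x]
      rw [this, Set.ncard_empty]
      exact Nat.zero_le _

/-- structure of an agent preferring `M'` to `MofN N` -/
lemma Hyp.pref_struct (hy : Hyp Gadj I) {N : Set (A × B)} {M' : Set _}
    (hM' : I.IsMatching M') {a : ReductionAgents Gadj}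
    (ha : Prefers I M' (MofN Gadj N) a) :
    fOfN Gadj N a ≠ houseA Gadj (proj Gadj a) ∧
      (a, houseA Gadj (proj Gadj a)) ∈ M' ∧
      ((∃ e : GraphEdges Gadj, a = Sum.inl e ∧ e.1 ∈ N) ∨
       (∃ u : A, a = Sum.inr u ∧ ¬ ∃ v, (u, v) ∈ N)) := by
  classical
  obtain ⟨h, hhM', hmin⟩ := ha
  have hlt : I.rank a h < I.rank a (fOfN Gadj N a) := hmin _ (mem_MofN' a)
  have hadj : I.adj a h := hM'.1 _ hhM'
  cases a with
  | inl e =>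
    by_cases he : e.1 ∈ N
    · rw [fOfN_inl_mem he] at hlt ⊢
      have hh : h = houseA Gadj e.1.1 := by
        rcases (hy.hadjE e h).1 hadj with rfl | rfl | rfl
        · rfl
        · exact absurd hlt (lt_irrefl _)
        · exfalso
          have h1 : houseB Gadj e.1.2 ≠ I.lastResort (Sum.inl e) := by
            rw [hy.hlr]; simp
          have := I.lastResort_worst (Sum.inl e) _
            ((hy.hadjE e _).2 (Or.inr (Or.inl rfl))) h1
          rw [hy.hlr] at this
          omega
      subst hh
      exact ⟨houseB_ne_houseA, hhM', Or.inl ⟨e, rfl, he⟩⟩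
    · exfalso
      rw [fOfN_inl_not he] at hlt
      by_cases hne : h = houseA Gadj (proj Gadj (Sum.inl e))
      · rw [hne] at hlt; exact lt_irrefl _ hlt
      · have := hy.rankMin (Sum.inl e) h hadj hne
        simp only [proj_inl] at this
        omega
  | inr u =>
    by_cases hu : ∃ v, (u, v) ∈ N
    · exfalso
      rw [fOfN_inr_mem hu] at hlt
      by_cases hne : h = houseA Gadj (proj Gadj (Sum.inr u))
      · rw [hne] at hlt; exact lt_irrefl _ hlt
      · have := hy.rankMin (Sum.inr u) h hadj hne
        simp only [proj_inr] at this
        omega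
    · rw [fOfN_inr_not hu] at hlt ⊢
      have hh : h = houseA Gadj u := by
        rcases (hy.hadjA u h).1 hadj with rfl | rfl | rfl
        · rfl
        · exact absurd hlt (lt_irrefl _)
        · exfalso
          have h1 : housePrime Gadj u ≠ I.lastResort (Sum.inr u) := by
            rw [hy.hlr]; simp
          have := I.lastResort_worst (Sum.inr u) _
            ((hy.hadjA u _).2 (Or.inr (Or.inl rfl))) h1
          rw [hy.hlr] at this
          omega
      subst hh
      exact ⟨housePrime_ne_houseA, hhM', Or.inr ⟨u, rfl, hu⟩⟩

lemma Hyp.exists_pref_back (hy : Hyp Gadj I) {N : Set (A × B)}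
    (hN : IsBipMatching Gadj N) {M' : Set _} (hM' : I.IsMatching M') (u : A)
    {a : ReductionAgents Gadj} (haM' : (a, houseA Gadj u) ∈ M')
    (haN : fOfN Gadj N a ≠ houseA Gadj u) :
    ∃ b, fOfN Gadj N b = houseA Gadj u ∧ Prefers I (MofN Gadj N) M' b := by
  classical
  by_contra hcon
  push_neg at hcon
  set S := {b : ReductionAgents Gadj | fOfN Gadj N b = houseA Gadj u} with hS
  set T := {b : ReductionAgents Gadj | (b, houseA Gadj u) ∈ M'} with hT
  have hST : S ⊆ T := by
    intro b hb
    simp only [hS, Set.mem_setOf_eq] at hb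
    by_contra hbT
    apply hcon b hb
    refine ⟨houseA Gadj u, by rw [mem_MofN]; exact hb.symm, ?_⟩
    intro h' hh'
    have hadj : I.adj b h' := hM'.1 _ hh'
    have hne : h' ≠ houseA Gadj u := by
      rintro rfl; exact hbT hh'
    have hproj : proj Gadj b = u := proj_of_fOfN hb
    have := hy.rankMin b h' hadj (by rw [hproj]; exact hne)
    rwa [hproj] at this
  have haS : a ∉ S := haN
  have hins : insert a S ⊆ T := Set.insert_subset haM' hST
  have h1 : (insert a S).ncard = deg Gadj u + 1 := by
    rw [Set.ncard_insert_of_notMem haS (Set.toFinite _), SAcard hN u]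
  have h2 : T.ncard ≤ deg Gadj u := by
    have := hM'.2.2 (houseA Gadj u)
    rwa [hy.hcapA] at this
  have h3 : (insert a S).ncard ≤ T.ncard := Set.ncard_le_ncard hins (Set.toFinite _)
  omega

lemma Hyp.MofN_popular (hy : Hyp Gadj I) {N : Set (A × B)}
    (hN : IsBipMatching Gadj N) : IsPopular I (MofN Gadj N) := by
  classical
  refine ⟨hy.MofN_isMatching hN, ?_⟩
  intro M' hM' hmp
  have hg : ∀ a : {a : ReductionAgents Gadj | Prefers I M' (MofN Gadj N) a},
      ∃ b : {a : ReductionAgents Gadj | Prefers I (MofN Gadj N) M' a},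
        fOfN Gadj N b.1 = houseA Gadj (proj Gadj a.1) := by
    rintro ⟨a, ha⟩
    obtain ⟨hne, hmem, _⟩ := hy.pref_struct hM' ha
    obtain ⟨b, hb1, hb2⟩ := hy.exists_pref_back hN hM' (proj Gadj a) hmem hne
    exact ⟨⟨b, hb2⟩, hb1⟩
  choose g hgs using hg
  have hginj : Function.Injective g := by
    rintro ⟨a1, ha1⟩ ⟨a2, ha2⟩ he
    have hp : proj Gadj a1 = proj Gadj a2 := by
      have h1 := hgs ⟨a1, ha1⟩
      have h2 := hgs ⟨a2, ha2⟩
      rw [he] at h1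
      exact houseA_inj.1 (h1.symm.trans h2)
    obtain ⟨-, -, hs1⟩ := hy.pref_struct hM' ha1
    obtain ⟨-, -, hs2⟩ := hy.pref_struct hM' ha2
    apply Subtype.ext
    show a1 = a2
    rcases hs1 with ⟨e1, rfl, he1⟩ | ⟨u1, rfl, hu1⟩ <;>
      rcases hs2 with ⟨e2, rfl, he2⟩ | ⟨u2, rfl, hu2⟩
    · simp only [proj_inl] at hp
      have : e1.1 = e2.1 := hN.2.1 _ he1 _ he2 hp
      rw [Subtype.ext this]
    · exfalso
      simp only [proj_inl, proj_inr] at hp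
      refine hu2 ⟨e1.1.2, ?_⟩
      have : ((u2, e1.1.2) : A × B) = e1.1 := by rw [← hp]
      rw [this]; exact he1
    · exfalso
      simp only [proj_inl, proj_inr] at hp
      refine hu1 ⟨e2.1.2, ?_⟩
      have : ((u1, e2.1.2) : A × B) = e2.1 := by rw [hp]
      rw [this]; exact he2
    · simp only [proj_inr] at hp
      rw [hp]
  have hle := Nat.card_le_card_of_injective g hginj
  exact absurd hmp (not_lt.2 hle)

end Main
end CHAProof

set_option linter.unusedSectionVars false

namespace CHAProof
open CHAInstance
variable {A B : Type*}

section Main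
variable [Fintype A] [Fintype B] {Gadj : A → B → Prop}
  [DecidablePred fun p : A × B => Gadj p.1 p.2]
  {I : CHAInstance (ReductionAgents Gadj) (ReductionHouses Gadj)}
  {M : Set (ReductionAgents Gadj × ReductionHouses Gadj)}

/-- If some agent can be strictly improved into an unsaturated house, `M` is not
popular. -/
lemma Hyp.improveAbsurd (hy : Hyp Gadj I) (hM : IsPopular I M)
    (a : ReductionAgents Gadj) (h : ReductionHouses Gadj)
    (hadj : I.adj a h) (hrk : ∀ h', (a, h') ∈ M → I.rank a h < I.rank a h')
    (hcap : {c | (c, h) ∈ M}.ncard < I.cap h) : False := by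
  classical
  set M'' := insert (a, h) (M \ {p | p.1 = a}) with hM''
  have hmem : ∀ p, p ∈ M'' ↔ p = (a, h) ∨ (p ∈ M ∧ p.1 ≠ a) := by
    intro p; simp [hM'', Set.mem_insert_iff, Set.mem_diff]
  have hmatch : I.IsMatching M'' := by
    refine ⟨?_, ?_, ?_⟩
    · intro p hp
      rcases (hmem p).1 hp with rfl | ⟨hpM, -⟩
      · exact hadj
      · exact hM.1.1 _ hpM
    · intro p hp q hq hpq
      rcases (hmem p).1 hp with rfl | ⟨hpM, hpa⟩ <;>
        rcases (hmem q).1 hq with rfl | ⟨hqM, hqa⟩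
      · rfl
      · exact absurd hpq.symm hqa
      · exact absurd hpq hpa
      · exact hM.1.2.1 _ hpM _ hqM hpq
    · intro h'
      by_cases hh : h' = h
      · subst hh
        have hsub : {c | (c, h') ∈ M''} ⊆ insert a {c | (c, h') ∈ M} := by
          intro c hc
          rcases (hmem _).1 hc with hc1 | ⟨hcM, -⟩
          · left; exact congrArg Prod.fst hc1
          · right; exact hcM
        calc {c | (c, h') ∈ M''}.ncard ≤ (insert a {c | (c, h') ∈ M}).ncard :=
              Set.ncard_le_ncard hsub (Set.toFinite _)
          _ ≤ {c | (c, h') ∈ M}.ncard + 1 := Set.ncard_insert_le _ _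
          _ ≤ I.cap h' := hcap
      · have hsub : {c | (c, h') ∈ M''} ⊆ {c | (c, h') ∈ M} := by
          intro c hc
          rcases (hmem _).1 hc with hc1 | ⟨hcM, -⟩
          · exact absurd (congrArg Prod.snd hc1) hh
          · exact hcM
        exact le_trans (Set.ncard_le_ncard hsub (Set.toFinite _)) (hM.1.2.2 h')
  apply hM.2 M'' hmatch
  have hP1 : a ∈ {c | Prefers I M'' M c} := by
    refine ⟨h, (hmem _).2 (Or.inl rfl), ?_⟩
    intro h' hh'
    exact hrk h' hh'
  have hP2 : {c | Prefers I M M'' c} = ∅ := by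
    ext c
    simp only [Set.mem_setOf_eq, Set.mem_empty_iff_false, iff_false]
    rintro ⟨x, hxM, hmin⟩
    by_cases hca : c = a
    · subst hca
      have h1 := hmin h ((hmem _).2 (Or.inl rfl))
      have h2 := hrk x hxM
      omega
    · have := hmin x ((hmem _).2 (Or.inr ⟨hxM, hca⟩))
      omega
  show Nat.card _ > Nat.card _
  rw [Nat.card_coe_set_eq, Nat.card_coe_set_eq, hP2, Set.ncard_empty]
  exact (Set.ncard_pos (Set.toFinite _)).2 ⟨a, hP1⟩

/-- in a popular matching, every agent is matched -/
lemma Hyp.popular_matched (hy : Hyp Gadj I) (hM : IsPopular I M)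
    (a : ReductionAgents Gadj) : ∃ h, (a, h) ∈ M := by
  by_contra hcon
  push_neg at hcon
  refine hy.improveAbsurd hM a (I.lastResort a) (I.lastResort_adj a) ?_ ?_
  · intro h' hh'; exact absurd hh' (hcon h')
  · have : {c | (c, I.lastResort a) ∈ M} = ∅ := by
      ext c
      simp only [Set.mem_setOf_eq, Set.mem_empty_iff_false, iff_false]
      intro hc
      have := I.lastResort_only a c (hM.1.1 _ hc)
      subst this
      exact hcon _ hc
    rw [this, Set.ncard_empty]
    exact I.cap_pos _

/-- if an agent is not matched to its first choice, that house is full -/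
lemma Hyp.full_of_displaced (hy : Hyp Gadj I) (hM : IsPopular I M)
    (a : ReductionAgents Gadj) (hnot : (a, houseA Gadj (proj Gadj a)) ∉ M) :
    {c | (c, houseA Gadj (proj Gadj a)) ∈ M}.ncard = deg Gadj (proj Gadj a) := by
  have hle : {c | (c, houseA Gadj (proj Gadj a)) ∈ M}.ncard ≤ deg Gadj (proj Gadj a) := by
    have := hM.1.2.2 (houseA Gadj (proj Gadj a))
    rwa [hy.hcapA] at this
  rcases eq_or_lt_of_le hle with heq | hlt
  · exact heq
  exfalso
  refine hy.improveAbsurd hM a (houseA Gadj (proj Gadj a)) (hy.adj_fc a) ?_ ?_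
  · intro h' hh'
    refine hy.rankMin a h' (hM.1.1 _ hh') ?_
    rintro rfl
    exact hnot hh'
  · rwa [hy.hcapA]

/-- agents adjacent to `houseA u` project to `u` -/
lemma Hyp.adj_houseA_proj (hy : Hyp Gadj I) {c : ReductionAgents Gadj} {u : A}
    (hadj : I.adj c (houseA Gadj u)) : proj Gadj c = u := by
  cases c with
  | inl e =>
    rcases (hy.hadjE e _).1 hadj with h | h | h
    · exact (houseA_inj.1 h).symm
    · exact absurd h houseA_ne_houseB
    · exact absurd h houseA_ne_inr
  | inr w =>
    rcases (hy.hadjA w _).1 hadj with h | h | h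
    · exact (houseA_inj.1 h).symm
    · exact absurd h houseA_ne_housePrime
    · exact absurd h houseA_ne_inr

lemma edges_at_card (u : A) :
    {e : GraphEdges Gadj | e.1.1 = u}.ncard = deg Gadj u := by
  have hinj : Set.InjOn (fun e : GraphEdges Gadj => e.1.2)
      {e : GraphEdges Gadj | e.1.1 = u} := by
    intro e1 h1 e2 h2 heq
    simp only [Set.mem_setOf_eq] at h1 h2
    apply Subtype.ext
    have h1' : e1.1 = (u, e1.1.2) := by rw [← h1]
    have h2' : e2.1 = (u, e2.1.2) := by rw [← h2]
    simp only at heq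
    rw [h1', h2', heq]
  have himg : (fun e : GraphEdges Gadj => e.1.2) '' {e : GraphEdges Gadj | e.1.1 = u} =
      {v : B | Gadj u v} := by
    ext v
    simp only [Set.mem_image, Set.mem_setOf_eq]
    constructor
    · rintro ⟨e, he, rfl⟩; rw [← he]; exact e.2
    · intro hv; exact ⟨⟨(u, v), hv⟩, rfl, rfl⟩
  rw [← Set.ncard_image_of_injOn hinj, himg]
  rfl

lemma proj_fiber_card (u : A) :
    {c : ReductionAgents Gadj | proj Gadj c = u}.ncard ≤ deg Gadj u + 1 := by
  have hsub : {c : ReductionAgents Gadj | proj Gadj c = u} ⊆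
      Sum.inl '' {e : GraphEdges Gadj | e.1.1 = u} ∪ {Sum.inr u} := by
    intro c hc
    cases c with
    | inl e => exact Or.inl ⟨e, hc, rfl⟩
    | inr w =>
      right
      have : w = u := hc
      simp [this]
  calc {c : ReductionAgents Gadj | proj Gadj c = u}.ncard
      ≤ (Sum.inl '' {e : GraphEdges Gadj | e.1.1 = u} ∪ {Sum.inr u}).ncard :=
        Set.ncard_le_ncard hsub (Set.toFinite _)
    _ ≤ (Sum.inl '' {e : GraphEdges Gadj | e.1.1 = u}).ncard + ({Sum.inr u} :
        Set (ReductionAgents Gadj)).ncard := Set.ncard_union_le _ _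
    _ = deg Gadj u + 1 := by
        rw [Set.ncard_image_of_injective _ Sum.inl_injective, edges_at_card,
          Set.ncard_singleton]

/-- at most one agent per `u` is displaced from its first choice -/
lemma Hyp.at_most_one_displaced (hy : Hyp Gadj I) (hM : IsPopular I M)
    {a1 a2 : ReductionAgents Gadj} (hp : proj Gadj a1 = proj Gadj a2)
    (h1 : (a1, houseA Gadj (proj Gadj a1)) ∉ M)
    (h2 : (a2, houseA Gadj (proj Gadj a2)) ∉ M) : a1 = a2 := by
  by_contra hne
  set u := proj Gadj a1 with hu
  have hfull := hy.full_of_displaced hM a1 h1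
  rw [← hu] at hfull
  set MA := {c | (c, houseA Gadj u) ∈ M} with hMA
  have hsub : insert a1 (insert a2 MA) ⊆ {c : ReductionAgents Gadj | proj Gadj c = u} := by
    intro c hc
    rcases hc with rfl | rfl | hc
    · exact hu.symm
    · exact hp.symm
    · exact hy.adj_houseA_proj (hM.1.1 _ hc)
  have ha2 : a2 ∉ MA := by
    intro hc
    apply h2
    rw [← hp]
    exact hc
  have ha1 : a1 ∉ insert a2 MA := by
    rintro (rfl | hc)
    · exact hne rfl
    · exact h1 hc
  have hcard : (insert a1 (insert a2 MA)).ncard = deg Gadj u + 2 := by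
    rw [Set.ncard_insert_of_notMem ha1 (Set.toFinite _),
      Set.ncard_insert_of_notMem ha2 (Set.toFinite _), hfull]
  have := Set.ncard_le_ncard hsub (Set.toFinite _)
  have := proj_fiber_card (Gadj := Gadj) u
  omega

end Main
end CHAProof

set_option linter.unusedSectionVars false

namespace CHAProof
open CHAInstance
variable {A B : Type*}

section Main
variable [Fintype A] [Fintype B] {Gadj : A → B → Prop}
  [DecidablePred fun p : A × B => Gadj p.1 p.2]
  {I : CHAInstance (ReductionAgents Gadj) (ReductionHouses Gadj)}
  {M : Set (ReductionAgents Gadj × ReductionHouses Gadj)}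

/-- the three-agent switch: if `e` sits at its last resort, `e'` occupies `houseB v`
and `a''` occupies the full house `houseA (e'.1.1)`, then `M` is not popular. -/
lemma Hyp.swap3_absurd (hy : Hyp Gadj I) (hM : IsPopular I M)
    (e e' : GraphEdges Gadj) (a'' : ReductionAgents Gadj)
    (he : (Sum.inl e, I.lastResort (Sum.inl e)) ∈ M)
    (he' : (Sum.inl e', houseB Gadj e.1.2) ∈ M)
    (hvv : e'.1.2 = e.1.2)
    (ha'' : (a'', houseA Gadj e'.1.1) ∈ M) : False := by
  classical
  have hfun := hM.1.2.1
  have hee' : Sum.inl e ≠ (Sum.inl e' : ReductionAgents Gadj) := by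
    intro hcon
    have h2 : (Sum.inl e, houseB Gadj e.1.2) ∈ M := by rw [hcon]; exact he'
    have hx := congrArg Prod.snd (hfun _ he _ h2 rfl)
    simp only at hx
    rw [hy.hlr] at hx
    exact inr_ne_houseB hx
  have ha''e : a'' ≠ Sum.inl e := by
    intro hcon
    have h2 : (a'', I.lastResort (Sum.inl e)) ∈ M := by rw [hcon]; exact he
    have hx := congrArg Prod.snd (hfun _ ha'' _ h2 rfl)
    simp only at hx
    rw [hy.hlr] at hx
    exact houseA_ne_inr hx
  have ha''e' : a'' ≠ Sum.inl e' := by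
    intro hcon
    have h2 : (a'', houseB Gadj e.1.2) ∈ M := by rw [hcon]; exact he'
    have hx := congrArg Prod.snd (hfun _ ha'' _ h2 rfl)
    simp only at hx
    exact houseA_ne_houseB hx
  -- the modified matching
  set M'' := insert ((Sum.inl e : ReductionAgents Gadj), houseB Gadj e.1.2)
    (insert ((Sum.inl e' : ReductionAgents Gadj), houseA Gadj e'.1.1)
      (insert (a'', I.lastResort a'')
        (M \ {p | p.1 = Sum.inl e ∨ p.1 = Sum.inl e' ∨ p.1 = a''}))) with hM''
  have hmem : ∀ p, p ∈ M'' ↔ p = (Sum.inl e, houseB Gadj e.1.2) ∨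
      p = (Sum.inl e', houseA Gadj e'.1.1) ∨ p = (a'', I.lastResort a'') ∨
      (p ∈ M ∧ ¬ (p.1 = Sum.inl e ∨ p.1 = Sum.inl e' ∨ p.1 = a'')) := by
    intro p
    simp only [hM'', Set.mem_insert_iff, Set.mem_diff, Set.mem_setOf_eq]
  have hlrworstB : I.rank (Sum.inl e) (houseB Gadj e.1.2) <
      I.rank (Sum.inl e) (I.lastResort (Sum.inl e)) := by
    refine I.lastResort_worst _ _ ((hy.hadjE e _).2 (Or.inr (Or.inl rfl))) ?_
    rw [hy.hlr]
    exact houseB_ne_inr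
  have hrkE' : I.rank (Sum.inl e') (houseA Gadj e'.1.1) <
      I.rank (Sum.inl e') (houseB Gadj e.1.2) := by
    rw [← hvv]
    exact hy.hrankE e'
  -- M'' is a matching
  have hmatch : I.IsMatching M'' := by
    refine ⟨?_, ?_, ?_⟩
    · intro p hp
      rcases (hmem p).1 hp with rfl | rfl | rfl | ⟨hpM, -⟩
      · exact (hy.hadjE e _).2 (Or.inr (Or.inl rfl))
      · exact (hy.hadjE e' _).2 (Or.inl rfl)
      · exact I.lastResort_adj _
      · exact hM.1.1 _ hpM
    · intro p hp q hq hpq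
      rcases (hmem p).1 hp with h1 | h1 | h1 | ⟨hpM, hpD⟩ <;>
        rcases (hmem q).1 hq with h2 | h2 | h2 | ⟨hqM, hqD⟩
      · rw [h1, h2]
      · exfalso; apply hee'; rw [h1, h2] at hpq; exact hpq
      · exfalso; apply ha''e; rw [h1, h2] at hpq; exact hpq.symm
      · exfalso; apply hqD; rw [← hpq, h1]; left; rfl
      · exfalso; apply hee'; rw [h1, h2] at hpq; exact hpq.symm
      · rw [h1, h2]
      · exfalso; apply ha''e'; rw [h1, h2] at hpq; exact hpq.symm
      · exfalso; apply hqD; rw [← hpq, h1]; right; left; rfl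
      · exfalso; apply ha''e; rw [h1, h2] at hpq; exact hpq
      · exfalso; apply ha''e'; rw [h1, h2] at hpq; exact hpq
      · rw [h1, h2]
      · exfalso; apply hqD; rw [← hpq, h1]; right; right; rfl
      · exfalso; apply hpD; rw [hpq, h2]; left; rfl
      · exfalso; apply hpD; rw [hpq, h2]; right; left; rfl
      · exfalso; apply hpD; rw [hpq, h2]; right; right; rfl
      · exact hfun _ hpM _ hqM hpq
    · intro h
      have hMcap := hM.1.2.2
      by_cases hh1 : h = houseB Gadj e.1.2
      · subst hh1
        have hcap1 : {c | (c, houseB Gadj e.1.2) ∈ M}.ncard ≤ 1 := by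
          have := hMcap (houseB Gadj e.1.2)
          rwa [hy.hcapB] at this
        have hsub : {c | (c, houseB Gadj e.1.2) ∈ M''} ⊆ {Sum.inl e} := by
          intro c hc
          rcases (hmem _).1 hc with hc1 | hc1 | hc1 | ⟨hcM, hcD⟩
          · exact congrArg Prod.fst hc1
          · exact absurd (congrArg Prod.snd hc1) houseB_ne_houseA
          · exact absurd (congrArg Prod.snd hc1) (by rw [hy.hlr]; exact houseB_ne_inr)
          · exfalso
            have : c = Sum.inl e' :=
              (Set.ncard_le_one_iff (Set.toFinite _)).1 hcap1 hcM he'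
            exact hcD (Or.inr (Or.inl this))
        calc _ ≤ ({Sum.inl e} : Set (ReductionAgents Gadj)).ncard :=
              Set.ncard_le_ncard hsub (Set.toFinite _)
          _ = 1 := Set.ncard_singleton _
          _ ≤ _ := by rw [hy.hcapB]
      · by_cases hh2 : h = houseA Gadj e'.1.1
        · subst hh2
          have hsub : {c | (c, houseA Gadj e'.1.1) ∈ M''} ⊆
              insert (Sum.inl e') ({c | (c, houseA Gadj e'.1.1) ∈ M} \ {a''}) := by
            intro c hc
            rcases (hmem _).1 hc with hc1 | hc1 | hc1 | ⟨hcM, hcD⟩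
            · exact absurd (congrArg Prod.snd hc1) houseA_ne_houseB
            · exact Or.inl (congrArg Prod.fst hc1)
            · exact absurd (congrArg Prod.snd hc1) (by rw [hy.hlr]; exact houseA_ne_inr)
            · refine Or.inr ⟨hcM, ?_⟩
              intro hca
              exact hcD (Or.inr (Or.inr hca))
          have h1 : 1 ≤ {c | (c, houseA Gadj e'.1.1) ∈ M}.ncard :=
            (Set.ncard_pos (Set.toFinite _)).2 ⟨a'', ha''⟩
          have h2 : ({c | (c, houseA Gadj e'.1.1) ∈ M} \ {a''}).ncard =
              {c | (c, houseA Gadj e'.1.1) ∈ M}.ncard - 1 :=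
            Set.ncard_diff_singleton_of_mem (s := {c | (c, houseA Gadj e'.1.1) ∈ M}) ha''
          have h3 := hMcap (houseA Gadj e'.1.1)
          calc {c | (c, houseA Gadj e'.1.1) ∈ M''}.ncard
              ≤ (insert (Sum.inl e') ({c | (c, houseA Gadj e'.1.1) ∈ M} \ {a''})).ncard :=
                Set.ncard_le_ncard hsub (Set.toFinite _)
            _ ≤ ({c | (c, houseA Gadj e'.1.1) ∈ M} \ {a''}).ncard + 1 :=
                Set.ncard_insert_le _ _
            _ ≤ I.cap (houseA Gadj e'.1.1) := by omega
        · by_cases hh3 : h = I.lastResort a''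
          · subst hh3
            have hsub : {c | (c, I.lastResort a'') ∈ M''} ⊆ {a''} := by
              intro c hc
              rcases (hmem _).1 hc with hc1 | hc1 | hc1 | ⟨hcM, hcD⟩
              · exfalso
                have hx := congrArg Prod.snd hc1
                simp only at hx
                rw [hy.hlr] at hx
                exact inr_ne_houseB hx
              · exfalso
                have hx := congrArg Prod.snd hc1
                simp only at hx
                rw [hy.hlr] at hx
                exact inr_ne_houseA hx
              · exact congrArg Prod.fst hc1
              · exfalso
                have := I.lastResort_only a'' c (hM.1.1 _ hcM)
                exact hcD (Or.inr (Or.inr this))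
            calc _ ≤ ({a''} : Set (ReductionAgents Gadj)).ncard :=
                  Set.ncard_le_ncard hsub (Set.toFinite _)
              _ = 1 := Set.ncard_singleton _
              _ ≤ _ := by rw [I.lastResort_cap]
          · have hsub : {c | (c, h) ∈ M''} ⊆ {c | (c, h) ∈ M} := by
              intro c hc
              rcases (hmem _).1 hc with hc1 | hc1 | hc1 | ⟨hcM, -⟩
              · exact absurd (congrArg Prod.snd hc1) hh1
              · exact absurd (congrArg Prod.snd hc1) hh2
              · exact absurd (congrArg Prod.snd hc1) hh3
              · exact hcM
            exact le_trans (Set.ncard_le_ncard hsub (Set.toFinite _)) (hMcap h)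
  -- M'' is more popular than M
  apply hM.2 M'' hmatch
  have hPe : Prefers I M'' M (Sum.inl e) := by
    refine ⟨houseB Gadj e.1.2, (hmem _).2 (Or.inl rfl), ?_⟩
    intro h' hh'
    have hx := congrArg Prod.snd (hfun _ hh' _ he rfl)
    simp only at hx
    rw [hx]
    exact hlrworstB
  have hPe' : Prefers I M'' M (Sum.inl e') := by
    refine ⟨houseA Gadj e'.1.1, (hmem _).2 (Or.inr (Or.inl rfl)), ?_⟩
    intro h' hh'
    have hx := congrArg Prod.snd (hfun _ hh' _ he' rfl)
    simp only at hx
    rw [hx]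
    exact hrkE'
  have hP2 : {c | Prefers I M M'' c} ⊆ {a''} := by
    rintro c ⟨x, hxM, hmin⟩
    by_cases hce : c = Sum.inl e
    · exfalso
      subst hce
      have hx := congrArg Prod.snd (hfun _ hxM _ he rfl)
      simp only at hx
      subst hx
      have := hmin _ ((hmem _).2 (Or.inl rfl))
      omega
    · by_cases hce' : c = Sum.inl e'
      · exfalso
        subst hce'
        have hx := congrArg Prod.snd (hfun _ hxM _ he' rfl)
        simp only at hx
        subst hx
        have := hmin _ ((hmem _).2 (Or.inr (Or.inl rfl)))
        omega
      · by_cases hca : c = a''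
        · exact hca
        · exfalso
          have hcD : ¬ (c = Sum.inl e ∨ c = Sum.inl e' ∨ c = a'') := by
            rintro (h | h | h)
            · exact hce h
            · exact hce' h
            · exact hca h
          have := hmin x ((hmem _).2 (Or.inr (Or.inr (Or.inr ⟨hxM, hcD⟩))))
          omega
  show Nat.card _ > Nat.card _
  rw [Nat.card_coe_set_eq, Nat.card_coe_set_eq]
  have hge : 2 ≤ {c | Prefers I M'' M c}.ncard := by
    have hsub : {Sum.inl e, Sum.inl e'} ⊆ {c | Prefers I M'' M c} := by
      rintro c (rfl | rfl)
      · exact hPe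
      · exact hPe'
    calc 2 = ({Sum.inl e, Sum.inl e'} : Set (ReductionAgents Gadj)).ncard :=
          (Set.ncard_pair hee').symm
      _ ≤ _ := Set.ncard_le_ncard hsub (Set.toFinite _)
  have hle : {c | Prefers I M M'' c}.ncard ≤ 1 :=
    le_trans (Set.ncard_le_ncard hP2 (Set.toFinite _)) (le_of_eq (Set.ncard_singleton _))
  omega

end Main
end CHAProof

set_option linter.unusedSectionVars false

namespace CHAProof
open CHAInstance
variable {A B : Type*}

section Main
variable [Fintype A] [Fintype B] {Gadj : A → B → Prop}
  [DecidablePred fun p : A × B => Gadj p.1 p.2]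
  {I : CHAInstance (ReductionAgents Gadj) (ReductionHouses Gadj)}
  {M : Set (ReductionAgents Gadj × ReductionHouses Gadj)}

/-- in a popular matching, no agent sits at its last resort -/
lemma Hyp.not_lastResort (hy : Hyp Gadj I) (hM : IsPopular I M)
    (a : ReductionAgents Gadj) : (a, I.lastResort a) ∉ M := by
  classical
  intro hmem
  have hfun := hM.1.2.1
  cases a with
  | inr u =>
    refine hy.improveAbsurd hM (Sum.inr u) (housePrime Gadj u)
      ((hy.hadjA u _).2 (Or.inr (Or.inl rfl))) ?_ ?_
    · intro h' hh'
      have : (Sum.inr u, h') = (Sum.inr u, I.lastResort (Sum.inr u)) :=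
        hfun _ hh' _ hmem rfl
      have hx := congrArg Prod.snd this
      simp only at hx
      subst hx
      refine I.lastResort_worst _ _ ((hy.hadjA u _).2 (Or.inr (Or.inl rfl))) ?_
      rw [hy.hlr]
      exact housePrime_ne_inr
    · have hempty : {c | (c, housePrime Gadj u) ∈ M} = ∅ := by
        ext c
        simp only [Set.mem_setOf_eq, Set.mem_empty_iff_false, iff_false]
        intro hc
        have hadj : I.adj c (housePrime Gadj u) := hM.1.1 _ hc
        cases c with
        | inl e =>
          rcases (hy.hadjE e _).1 hadj with h | h | h
          · exact housePrime_ne_houseA h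
          · exact housePrime_ne_houseB h
          · exact housePrime_ne_inr h
        | inr w =>
          rcases (hy.hadjA w _).1 hadj with h | h | h
          · exact housePrime_ne_houseA h
          · have hw : u = w := housePrime_inj.1 h
            subst hw
            have := hfun _ hc _ hmem rfl
            have hx := congrArg Prod.snd this
            simp only at hx
            rw [hy.hlr] at hx
            exact housePrime_ne_inr hx
          · exact housePrime_ne_inr h
      rw [hempty, Set.ncard_empty, hy.hcapPrime]
      norm_num
  | inl e =>
    by_cases hocc : ∃ c, (c, houseB Gadj e.1.2) ∈ M
    · obtain ⟨c, hc⟩ := hocc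
      have hadjc := hM.1.1 _ hc
      cases c with
      | inr w =>
        exfalso
        rcases (hy.hadjA w _).1 hadjc with h | h | h
        · exact houseB_ne_houseA h
        · exact houseB_ne_housePrime h
        · exact houseB_ne_inr h
      | inl e' =>
        have hvv : e'.1.2 = e.1.2 := by
          rcases (hy.hadjE e' _).1 hadjc with h | h | h
          · exact absurd h houseB_ne_houseA
          · exact (houseB_inj.1 h).symm
          · exact absurd h houseB_ne_inr
        by_cases hfull : {c | (c, houseA Gadj e'.1.1) ∈ M}.ncard <
            I.cap (houseA Gadj e'.1.1)
        · refine hy.improveAbsurd hM (Sum.inl e') (houseA Gadj e'.1.1)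
            ((hy.hadjE e' _).2 (Or.inl rfl)) ?_ hfull
          intro h' hh'
          have : (Sum.inl e', h') = (Sum.inl e', houseB Gadj e.1.2) :=
            hfun _ hh' _ hc rfl
          have hx := congrArg Prod.snd this
          simp only at hx
          subst hx
          rw [← hvv]
          exact hy.hrankE e'
        · push_neg at hfull
          have hpos : 0 < {c | (c, houseA Gadj e'.1.1) ∈ M}.ncard := by
            have h1 : 0 < I.cap (houseA Gadj e'.1.1) := I.cap_pos _
            omega
          obtain ⟨a'', ha''⟩ := (Set.ncard_pos (Set.toFinite _)).1 hpos
          exact hy.swap3_absurd hM e e' a'' hmem hc hvv ha''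
    · push_neg at hocc
      refine hy.improveAbsurd hM (Sum.inl e) (houseB Gadj e.1.2)
        ((hy.hadjE e _).2 (Or.inr (Or.inl rfl))) ?_ ?_
      · intro h' hh'
        have : (Sum.inl e, h') = (Sum.inl e, I.lastResort (Sum.inl e)) :=
          hfun _ hh' _ hmem rfl
        have hx := congrArg Prod.snd this
        simp only at hx
        subst hx
        refine I.lastResort_worst _ _ ((hy.hadjE e _).2 (Or.inr (Or.inl rfl))) ?_
        rw [hy.hlr]
        exact houseB_ne_inr
      · have hempty : {c | (c, houseB Gadj e.1.2) ∈ M} = ∅ := by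
          ext c
          simp only [Set.mem_setOf_eq, Set.mem_empty_iff_false, iff_false]
          exact hocc c
        rw [hempty, Set.ncard_empty, hy.hcapB]
        norm_num

/-- every popular matching has the form `MofN N` for a bipartite matching `N` -/
lemma Hyp.popular_eq_MofN (hy : Hyp Gadj I) (hM : IsPopular I M) :
    ∃ N : Set (A × B), IsBipMatching Gadj N ∧ M = MofN Gadj N := by
  classical
  have hfun := hM.1.2.1
  set N := {q : A × B | ∃ hq : Gadj q.1 q.2,
    (Sum.inl (⟨q, hq⟩ : GraphEdges Gadj), houseB Gadj q.2) ∈ M} with hN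
  have hNmem : ∀ e : GraphEdges Gadj, e.1 ∈ N ↔ (Sum.inl e, houseB Gadj e.1.2) ∈ M := by
    intro e
    constructor
    · rintro ⟨hq, hqM⟩
      rwa [show (⟨e.1, hq⟩ : GraphEdges Gadj) = e from Subtype.ext rfl] at hqM
    · intro h
      exact ⟨e.2, by rwa [show (⟨e.1, e.2⟩ : GraphEdges Gadj) = e from Subtype.ext rfl]⟩
  have hdisp : ∀ e : GraphEdges Gadj, e.1 ∈ N →
      (Sum.inl e, houseA Gadj (proj Gadj (Sum.inl e))) ∉ M := by
    intro e he hmem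
    have := hfun _ hmem _ ((hNmem e).1 he) rfl
    have hx := congrArg Prod.snd this
    simp only [proj_inl] at hx
    exact houseA_ne_houseB hx
  have hbip : IsBipMatching Gadj N := by
    refine ⟨fun p hp => hp.choose, ?_, ?_⟩
    · intro p hp q hq hfst
      set e1 : GraphEdges Gadj := ⟨p, hp.choose⟩ with he1
      set e2 : GraphEdges Gadj := ⟨q, hq.choose⟩ with he2
      have h1 : e1.1 ∈ N := hp
      have h2 : e2.1 ∈ N := hq
      have hproj : proj Gadj (Sum.inl e1) = proj Gadj (Sum.inl e2) := by
        simp only [proj_inl, he1, he2]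
        exact hfst
      have := hy.at_most_one_displaced hM hproj (hdisp e1 h1) (hdisp e2 h2)
      have : e1 = e2 := Sum.inl_injective this
      exact Subtype.ext_iff.1 this
    · intro p hp q hq hsnd
      have h1 := (hNmem ⟨p, hp.choose⟩).1 hp
      have h2 := (hNmem ⟨q, hq.choose⟩).1 hq
      simp only at h1 h2
      have hpair := congrArg (fun v : B =>
        ((Sum.inl (⟨p, hp.choose⟩ : GraphEdges Gadj) : ReductionAgents Gadj),
          houseB Gadj v)) hsnd
      have h1 := Set.mem_of_eq_of_mem hpair.symm h1
      have hcap1 : {c | (c, houseB Gadj q.2) ∈ M}.ncard ≤ 1 := by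
        have := hM.1.2.2 (houseB Gadj q.2)
        rwa [hy.hcapB] at this
      have heq : (Sum.inl (⟨p, hp.choose⟩ : GraphEdges Gadj) : ReductionAgents Gadj) =
          Sum.inl (⟨q, hq.choose⟩ : GraphEdges Gadj) :=
        (Set.ncard_le_one_iff (Set.toFinite _)).1 hcap1 h1 h2
      have := Subtype.ext_iff.1 (Sum.inl_injective heq)
      exact this
  have htot : ∀ a, (a, fOfN Gadj N a) ∈ M := by
    intro a
    cases a with
    | inl e =>
      by_cases he : e.1 ∈ N
      · rw [fOfN_inl_mem he]
        exact (hNmem e).1 he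
      · rw [fOfN_inl_not he]
        obtain ⟨h, hmem⟩ := hy.popular_matched hM (Sum.inl e)
        rcases (hy.hadjE e h).1 (hM.1.1 _ hmem) with rfl | rfl | rfl
        · exact hmem
        · exact absurd ((hNmem e).2 hmem) he
        · exfalso
          have := hy.not_lastResort hM (Sum.inl e)
          rw [hy.hlr] at this
          exact this hmem
    | inr u =>
      obtain ⟨h, hmem⟩ := hy.popular_matched hM (Sum.inr u)
      by_cases hu : ∃ v, (u, v) ∈ N
      · rw [fOfN_inr_mem hu]
        rcases (hy.hadjA u h).1 (hM.1.1 _ hmem) with rfl | rfl | rfl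
        · exact hmem
        · exfalso
          obtain ⟨v0, hv0⟩ := hu
          set e0 : GraphEdges Gadj := ⟨(u, v0), hv0.choose⟩ with he0
          have hd1 : (Sum.inl e0, houseA Gadj (proj Gadj (Sum.inl e0))) ∉ M :=
            hdisp e0 hv0
          have hd2 : ((Sum.inr u : ReductionAgents Gadj),
              houseA Gadj (proj Gadj (Sum.inr u : ReductionAgents Gadj))) ∉ M := by
            intro hcon
            have := hfun _ hcon _ hmem rfl
            have hx := congrArg Prod.snd this
            simp only [proj_inr] at hx
            exact houseA_ne_housePrime hx
          have hproj : proj Gadj (Sum.inl e0) = proj Gadj (Sum.inr u : ReductionAgents Gadj) := rfl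
          have := hy.at_most_one_displaced hM hproj hd1 hd2
          exact Sum.inl_ne_inr this
        · exfalso
          have := hy.not_lastResort hM (Sum.inr u)
          rw [hy.hlr] at this
          exact this hmem
      · rw [fOfN_inr_not hu]
        rcases (hy.hadjA u h).1 (hM.1.1 _ hmem) with rfl | rfl | rfl
        · exfalso
          have hedge : ∀ e : GraphEdges Gadj, e.1.1 = u →
              (Sum.inl e, houseA Gadj u) ∈ M := by
            intro e heu
            obtain ⟨h', hmem'⟩ := hy.popular_matched hM (Sum.inl e)
            rcases (hy.hadjE e h').1 (hM.1.1 _ hmem') with rfl | rfl | rfl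
            · rwa [heu] at hmem'
            · exfalso
              refine hu ⟨e.1.2, ?_⟩
              have heta : ((u, e.1.2) : A × B) = e.1 := by rw [← heu]
              rw [heta]
              exact (hNmem e).2 hmem'
            · exfalso
              have := hy.not_lastResort hM (Sum.inl e)
              rw [hy.hlr] at this
              exact this hmem'
          have hsub : insert (Sum.inr u : ReductionAgents Gadj)
              (Sum.inl '' {e : GraphEdges Gadj | e.1.1 = u}) ⊆
              {c | (c, houseA Gadj u) ∈ M} := by
            rintro c (rfl | ⟨e, he, rfl⟩)
            · exact hmem
            · exact hedge e he
          have hnotmem : (Sum.inr u : ReductionAgents Gadj) ∉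
              Sum.inl '' {e : GraphEdges Gadj | e.1.1 = u} := by
            rintro ⟨e, -, hcon⟩
            exact Sum.inl_ne_inr hcon
          have hins : (insert (Sum.inr u : ReductionAgents Gadj)
              (Sum.inl '' {e : GraphEdges Gadj | e.1.1 = u})).ncard = deg Gadj u + 1 := by
            rw [Set.ncard_insert_of_notMem hnotmem (Set.toFinite _),
              Set.ncard_image_of_injective _ Sum.inl_injective, edges_at_card]
          have hle := Set.ncard_le_ncard hsub (Set.toFinite _)
          have hcap : {c : ReductionAgents Gadj | (c, houseA Gadj u) ∈ M}.ncard ≤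
              deg Gadj u := by
            have := hM.1.2.2 (houseA Gadj u)
            rwa [hy.hcapA] at this
          rw [hins] at hle
          exact absurd (le_trans hle hcap) (by omega)
        · exact hmem
        · exfalso
          have := hy.not_lastResort hM (Sum.inr u)
          rw [hy.hlr] at this
          exact this hmem
  refine ⟨N, hbip, ?_⟩
  ext ⟨a, h⟩
  constructor
  · intro hmem
    rw [mem_MofN]
    have := hfun _ hmem _ (htot a) rfl
    exact congrArg Prod.snd this
  · intro hmem
    rw [mem_MofN] at hmem
    simp only at hmem
    subst hmem
    exact htot a

lemma MofN_subset {N1 N2 : Set (A × B)} (hbip : IsBipMatching Gadj N1)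
    (heq : MofN Gadj N1 = MofN Gadj N2) : N1 ⊆ N2 := by
  classical
  intro q hq
  have he : ((Sum.inl (⟨q, hbip.1 q hq⟩ : GraphEdges Gadj) : ReductionAgents Gadj),
      houseB Gadj q.2) ∈ MofN Gadj N1 := by
    rw [mem_MofN]
    exact (fOfN_inl_mem (show ((⟨q, hbip.1 q hq⟩ : GraphEdges Gadj) : GraphEdges Gadj).1 ∈ N1
      from hq)).symm
  rw [heq, mem_MofN] at he
  simp only at he
  by_contra hq2
  rw [fOfN_inl_not (show ((⟨q, hbip.1 q hq⟩ : GraphEdges Gadj) : GraphEdges Gadj).1 ∉ N2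
    from hq2)] at he
  exact houseB_ne_houseA he

lemma Hyp.main (hy : Hyp Gadj I) :
    Nat.card {N : Set (A × B) // IsBipMatching Gadj N} =
      Nat.card {M : Set (ReductionAgents Gadj × ReductionHouses Gadj) //
        IsPopular I M} := by
  apply Nat.card_eq_of_bijective
    (fun N => (⟨MofN Gadj N.1, hy.MofN_popular N.2⟩ :
      {M : Set (ReductionAgents Gadj × ReductionHouses Gadj) // IsPopular I M}))
  constructor
  · rintro ⟨N1, h1⟩ ⟨N2, h2⟩ heq
    simp only [Subtype.mk.injEq] at heq
    exact Subtype.ext (le_antisymm (MofN_subset h1 heq) (MofN_subset h2 heq.symm))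
  · rintro ⟨M, hM⟩
    obtain ⟨N, hN, hMN⟩ := hy.popular_eq_MofN hM
    exact ⟨⟨N, hN⟩, Subtype.ext hMN.symm⟩

end Main
end CHAProof

open CHAInstance in
/-- let `G = (A ∪ B, E)` be a connected bipartite graph, and let `I` be
the CHA instance whose switching graph with respect to the popular matching `M_φ`
(corresponding to the empty matching of `G`) is the graph `S` obtained by orienting
every edge of `G` from `A` to `B` with weight `-1` and adding, for every `u ∈ A`, a new
vertex `u'` and a `+1` edge `u' → u`; every vertex of `A' ∪ A` is saturated and every
vertex of `B` is unsaturated with unsaturation degree `1`.  Concretely: `I` has houses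
`A' ⊕ A ⊕ B` (plus last resorts) and one agent per edge of `S`; the agent of the `-1`
edge `u → v` has first choice `u` and second choice `v`, the agent of the `+1` edge
`u' → u` has first choice `u` and second choice `u'`; the capacities are
`c(u') = 1`, `c(u) = deg_G(u)` and `c(v) = 1`.  Then the number of matchings of `G`
(including the empty one) equals the number of popular matchings of `I`. -/
theorem card_matchings_eq_card_popular
    {A B : Type*} [Fintype A] [Fintype B]
    (Gadj : A → B → Prop) [DecidablePred fun p : A × B => Gadj p.1 p.2]
    (hconn : (GraphOfRel Gadj).Connected)
    (I : CHAInstance (ReductionAgents Gadj) (ReductionHouses Gadj))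
    (hlr : I.lastResort = Sum.inr)
    (hadjE : ∀ (e : GraphEdges Gadj) (h : ReductionHouses Gadj),
      I.adj (Sum.inl e) h ↔
        (h = houseA Gadj e.1.1 ∨ h = houseB Gadj e.1.2 ∨ h = Sum.inr (Sum.inl e)))
    (hadjA : ∀ (u : A) (h : ReductionHouses Gadj),
      I.adj (Sum.inr u) h ↔
        (h = houseA Gadj u ∨ h = housePrime Gadj u ∨ h = Sum.inr (Sum.inr u)))
    (hrankE : ∀ e : GraphEdges Gadj,
      I.rank (Sum.inl e) (houseA Gadj e.1.1) < I.rank (Sum.inl e) (houseB Gadj e.1.2))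
    (hrankA : ∀ u : A,
      I.rank (Sum.inr u) (houseA Gadj u) < I.rank (Sum.inr u) (housePrime Gadj u))
    (hcapPrime : ∀ u : A, I.cap (housePrime Gadj u) = 1)
    (hcapA : ∀ u : A, I.cap (houseA Gadj u) = {v : B | Gadj u v}.ncard)
    (hcapB : ∀ v : B, I.cap (houseB Gadj v) = 1) :
    Nat.card {N : Set (A × B) // IsBipMatching Gadj N} =
      Nat.card {M : Set (ReductionAgents Gadj × ReductionHouses Gadj) //
        IsPopular I M} := by
  exact CHAProof.Hyp.main
    ⟨hlr, hadjE, hadjA, hrankE, hrankA, hcapPrime, hcapA, hcapB⟩
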